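/- arXiv:2412.18467 — 3 statements merged into one kernel-verified Lean document; each statement's English description precedes it below -/
import Mathlib

section
/- For every 3×3 real matrix A, √3·|cof A| ≤ |A|², where |·| is the Frobenius norm and cof A is the cofactor matrix. Moreover, equality holds for A equal to the identity matrix, so the constant √3 is sharp. -/
/-- The cofactor matrix of a 3×3 real matrix: the transpose of the adjugate. -/
noncomputable def cof3 (A : Matrix (Fin 3) (Fin 3) ℝ) : Matrix (Fin 3) (Fin 3) ℝ :=
  A.adjugate.transpose

lemma cof3_key (A : Matrix (Fin 3) (Fin 3) ℝ) :
    3 * (∑ i, ∑ j, (cof3 A i j) ^ 2) ≤ (∑ i, ∑ j, (A i j) ^ 2) ^ 2 := by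
  simp only [cof3, Matrix.adjugate_fin_three, Fin.sum_univ_three, Matrix.transpose_apply,
    Matrix.of_apply, Matrix.cons_val', Matrix.cons_val_zero, Matrix.cons_val_one,
    Matrix.head_cons, Matrix.empty_val', Matrix.cons_val_fin_one, Matrix.head_fin_const,
    Matrix.cons_val_two, Matrix.tail_cons]
  nlinarith [sq_nonneg (A 0 0 * A 1 0 + A 0 1 * A 1 1 + A 0 2 * A 1 2),
    sq_nonneg (A 0 0 * A 2 0 + A 0 1 * A 2 1 + A 0 2 * A 2 2),
    sq_nonneg (A 1 0 * A 2 0 + A 1 1 * A 2 1 + A 1 2 * A 2 2),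
    sq_nonneg (A 0 0^2 + A 0 1^2 + A 0 2^2 - A 1 0^2 - A 1 1^2 - A 1 2^2),
    sq_nonneg (A 0 0^2 + A 0 1^2 + A 0 2^2 - A 2 0^2 - A 2 1^2 - A 2 2^2),
    sq_nonneg (A 1 0^2 + A 1 1^2 + A 1 2^2 - A 2 0^2 - A 2 1^2 - A 2 2^2)]

/-- For every 3×3 real matrix `A`, `√3 · |cof A| ≤ |A|²` (Frobenius norms), with
equality for `A = 1`, so the constant `√3` is sharp. -/
theorem sqrt_three_cof_le_frobenius_sq :
    (∀ A : Matrix (Fin 3) (Fin 3) ℝ,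
      Real.sqrt 3 * Real.sqrt (∑ i, ∑ j, (cof3 A i j) ^ 2) ≤ ∑ i, ∑ j, (A i j) ^ 2) ∧
    Real.sqrt 3 * Real.sqrt (∑ i, ∑ j, (cof3 (1 : Matrix (Fin 3) (Fin 3) ℝ) i j) ^ 2)
      = ∑ i, ∑ j, ((1 : Matrix (Fin 3) (Fin 3) ℝ) i j) ^ 2 := by
  constructor
  · intro A
    have hS : (0:ℝ) ≤ ∑ i, ∑ j, (cof3 A i j) ^ 2 :=
      Finset.sum_nonneg fun i _ => Finset.sum_nonneg fun j _ => sq_nonneg _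
    have hT : (0:ℝ) ≤ ∑ i, ∑ j, (A i j) ^ 2 :=
      Finset.sum_nonneg fun i _ => Finset.sum_nonneg fun j _ => sq_nonneg _
    rw [← Real.sqrt_mul (by norm_num) _]
    calc Real.sqrt (3 * ∑ i, ∑ j, (cof3 A i j) ^ 2)
        ≤ Real.sqrt ((∑ i, ∑ j, (A i j) ^ 2) ^ 2) := Real.sqrt_le_sqrt (cof3_key A)
      _ = ∑ i, ∑ j, (A i j) ^ 2 := Real.sqrt_sq hT
  · simp [cof3, Matrix.adjugate_one, Fin.sum_univ_three, Matrix.one_apply]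
end

section
/- Let Ω = B(0,1) ⊂ ℝ², ω = B(0,ρ) for fixed ρ ∈ (0,1), M ∈ ℝ with 4 + M − Mρ² ≠ 0, and set ζ = 4/(4+M−Mρ²), ξ = (4+M)/(4+M−Mρ²). Define u(x) = ζx for |x| ≤ ρ and u(x) = (ξ + (1−ξ)/|x|²)x for ρ < |x| ≤ 1. Then u is continuous on B(0,1), u(x) = x on |x| = 1, u is harmonic on B(0,ρ) and on B(0,1)\overline{B(0,ρ)}, and the jump condition 2∂_ν u|_ω + 2∂_{−ν}u|_{Ω∖ω} − M J ∂_τ u = 0 holds on the circle |x| = ρ. -/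
open MeasureTheory

/-- Planar points/vectors. -/
abbrev V2 := Fin 2 → ℝ

/-- Euclidean norm on `ℝ²`. -/
noncomputable def en (x : V2) : ℝ := Real.sqrt (x 0 ^ 2 + x 1 ^ 2)

/-- The (classical) gradient of `u : ℝ² → ℝ²` as a 2×2 matrix field. -/
noncomputable def grad2 (u : V2 → V2) (x : V2) : Matrix (Fin 2) (Fin 2) ℝ :=
  fun i j => fderiv ℝ u x (Pi.single j 1) i

/-- The (componentwise) Laplacian of `u : ℝ² → ℝ²`. -/
noncomputable def lap2 (u : V2 → V2) (x : V2) : V2 :=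
  ∑ j : Fin 2, fderiv ℝ (fun y => fderiv ℝ u y (Pi.single j 1)) x (Pi.single j 1)

/-- The matrix of rotation by π/2 anticlockwise. -/
noncomputable def Jmat : Matrix (Fin 2) (Fin 2) ℝ := !![0, -1; 1, 0]

/-! ### Auxiliary machinery -/

/-- The squared Euclidean norm, as a polynomial expression. -/
noncomputable def qf (y : V2) : ℝ := y 0 * y 0 + y 1 * y 1

lemma continuous_qf : Continuous qf := by unfold qf; fun_prop

lemma en_sq (y : V2) : en y ^ 2 = qf y := by
  rw [en, Real.sq_sqrt (by positivity)]; unfold qf; ring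

lemma continuous_en : Continuous en := by unfold en; fun_prop

/-- Derivative of `qf`. -/
noncomputable def Lq (x : V2) : V2 →L[ℝ] ℝ :=
  (x 0 • (ContinuousLinearMap.proj 0 : V2 →L[ℝ] ℝ) + x 0 • (ContinuousLinearMap.proj 0 : V2 →L[ℝ] ℝ)) +
  (x 1 • (ContinuousLinearMap.proj 1 : V2 →L[ℝ] ℝ) + x 1 • (ContinuousLinearMap.proj 1 : V2 →L[ℝ] ℝ))

lemma hasFDerivAt_qf (x : V2) : HasFDerivAt qf (Lq x) x := by
  have h0 : HasFDerivAt (fun y : V2 => y 0) (ContinuousLinearMap.proj 0 : V2 →L[ℝ] ℝ) x :=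
    hasFDerivAt_apply 0 x
  have h1 : HasFDerivAt (fun y : V2 => y 1) (ContinuousLinearMap.proj 1 : V2 →L[ℝ] ℝ) x :=
    hasFDerivAt_apply 1 x
  exact (h0.mul h0).add (h1.mul h1)

lemma Lq_apply (x v : V2) : Lq x v = 2 * (x 0 * v 0 + x 1 * v 1) := by
  simp [Lq]; ring

/-- Derivative of the scalar coefficient `ξ + c/q`. -/
noncomputable def Ls (ξ c : ℝ) (x : V2) : V2 →L[ℝ] ℝ := c • ((-(qf x ^ 2)⁻¹) • Lq x)

lemma hasFDerivAt_sc (ξ c : ℝ) (x : V2) (hne : qf x ≠ 0) :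
    HasFDerivAt (fun y => ξ + c * (qf y)⁻¹) (Ls ξ c x) x :=
  (((hasDerivAt_inv hne).comp_hasFDerivAt x (hasFDerivAt_qf x)).const_mul c).const_add ξ

/-- Derivative of the outer map. -/
noncomputable def Dout (ξ c : ℝ) (x : V2) : V2 →L[ℝ] V2 :=
  (ξ + c * (qf x)⁻¹) • ContinuousLinearMap.id ℝ V2 + (Ls ξ c x).smulRight x

lemma hasFDerivAt_uoutq (ξ c : ℝ) (x : V2) (hne : qf x ≠ 0) :
    HasFDerivAt (fun y => (ξ + c * (qf y)⁻¹) • y) (Dout ξ c x) x :=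
  (hasFDerivAt_sc ξ c x hne).smul (hasFDerivAt_id x)

lemma Dout_apply (ξ c : ℝ) (x v : V2) :
    Dout ξ c x v = (ξ + c * (qf x)⁻¹) • v + (c * (-(qf x ^ 2)⁻¹ * (2 * (x 0 * v 0 + x 1 * v 1)))) • x := by
  simp [Dout, Ls, Lq_apply, ContinuousLinearMap.smulRight_apply]

/-- Derivative of the coefficient of the second `smul` in the first-derivative field. -/
noncomputable def bL (c : ℝ) (j : Fin 2) (x : V2) : V2 →L[ℝ] ℝ :=
  -(2*c) • (x j • ((-((qf x * qf x) ^ 2)⁻¹) • (qf x • Lq x + qf x • Lq x)) +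
    (qf x * qf x)⁻¹ • (ContinuousLinearMap.proj j : V2 →L[ℝ] ℝ))

/-- Derivative of the `j`-th partial-derivative field of the outer map. -/
noncomputable def DF (ξ c : ℝ) (j : Fin 2) (x : V2) : V2 →L[ℝ] V2 :=
  (Ls ξ c x).smulRight (Pi.single j 1) +
  ((-(2*c) * (x j * (qf x * qf x)⁻¹)) • ContinuousLinearMap.id ℝ V2 + (bL c j x).smulRight x)

lemma hasFDerivAt_Fj (ξ c : ℝ) (j : Fin 2) (x : V2) (hne : qf x ≠ 0) :
    HasFDerivAt (fun y : V2 => (ξ + c * (qf y)⁻¹) • (Pi.single j 1 : V2) +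
      (-(2*c) * (y j * (qf y * qf y)⁻¹)) • y) (DF ξ c j x) x := by
  have hqq : HasFDerivAt (fun y => qf y * qf y) (qf x • Lq x + qf x • Lq x) x :=
    (hasFDerivAt_qf x).mul (hasFDerivAt_qf x)
  have hqqinv : HasFDerivAt (fun y => (qf y * qf y)⁻¹)
      ((-((qf x * qf x) ^ 2)⁻¹) • (qf x • Lq x + qf x • Lq x)) x :=
    (hasDerivAt_inv (mul_ne_zero hne hne)).comp_hasFDerivAt x hqq
  have hb : HasFDerivAt (fun y : V2 => -(2*c) * (y j * (qf y * qf y)⁻¹)) (bL c j x) x :=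
    ((hasFDerivAt_apply j x).mul hqqinv).const_mul (-(2*c))
  exact ((hasFDerivAt_sc ξ c x hne).smul_const (Pi.single j 1)).add (hb.smul (hasFDerivAt_id x))

/-- Evaluation of `Dout` on a basis vector, in the form needed for the second derivative. -/
lemma Dout_single (ξ : ℝ) (y : V2) (j : Fin 2) :
    Dout ξ (1-ξ) y (Pi.single j 1) =
      (ξ + (1-ξ) * (qf y)⁻¹) • (Pi.single j 1 : V2) +
          (-(2*(1-ξ)) * (y j * (qf y * qf y)⁻¹)) • y := by
  rw [Dout_apply]
  funext i
  fin_cases j <;> fin_cases i <;> (simp [Pi.single_apply] <;> (left; ring))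

set_option maxHeartbeats 1000000 in
/-- Harmonicity of the outer map: the Laplacian, assembled from the `DF`s, vanishes. -/
lemma lap_annulus (ξ c : ℝ) (x : V2) (hne : qf x ≠ 0) :
    DF ξ c 0 x (Pi.single 0 1) + DF ξ c 1 x (Pi.single 1 1) = 0 := by
  have hq : x 0 * x 0 + x 1 * x 1 ≠ 0 := hne
  funext i
  fin_cases i <;>
    (simp [DF, bL, Ls, Lq, qf, ContinuousLinearMap.smulRight_apply, Pi.single_apply] ;
     field_simp ;
     ring)

set_option maxHeartbeats 1000000 in
/-- The jump condition, in evaluated form. -/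
lemma jump_eval (ρ M ζ ξ : ℝ) (hρ0 : 0 < ρ)
    (h1 : ζ * ρ ^ 2 = ξ * ρ ^ 2 + (1 - ξ))
    (h2 : 4 * (1 - ξ) + M * (ζ * ρ ^ 2) = 0)
    (x : V2) (hqx : qf x = ρ ^ 2) :
    (2 : ℝ) • (ζ • ContinuousLinearMap.id ℝ V2) (ρ⁻¹ • x)
      + (2 : ℝ) • (Dout ξ (1-ξ) x) (-(ρ⁻¹ • x))
      - M • Jmat.mulVec ((ζ • ContinuousLinearMap.id ℝ V2) (Jmat.mulVec (ρ⁻¹ • x))) = 0 := by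
  have hx0 : x 0 * x 0 + x 1 * x 1 = ρ ^ 2 := hqx
  have hρ : ρ ≠ 0 := hρ0.ne'
  funext i
  fin_cases i
  · simp [Dout_apply, hqx, Jmat, Matrix.mulVec, dotProduct, Fin.sum_univ_two]
    field_simp
    linear_combination (2*x 0*ρ^2) * h1 + (4*x 0*(1-ξ)) * hx0 + (x 0*ρ^2) * h2
  · simp [Dout_apply, hqx, Jmat, Matrix.mulVec, dotProduct, Fin.sum_univ_two]
    field_simp
    linear_combination (2*x 1*ρ^2) * h1 + (4*x 1*(1-ξ)) * hx0 + (x 1*ρ^2) * h2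

set_option maxHeartbeats 1000000 in
/-- The disk-disk map `u` (equal to `ζx` on `B(0,ρ)` and to `(ξ+(1−ξ)/|x|²)x` outside)
is continuous on the closed unit ball, is the identity on the unit circle, is harmonic
in `B(0,ρ)` and in the open annulus, and satisfies the jump condition
`2∂_ν u|_ω + 2∂_{−ν}u|_{Ω∖ω} − M J ∂_τ u = 0` on `|x| = ρ`. -/
theorem disk_disk_solution (ρ M ζ ξ : ℝ) (hρ0 : 0 < ρ) (hρ1 : ρ < 1)
    (hden : 4 + M - M * ρ ^ 2 ≠ 0)
    (hζ : ζ = 4 / (4 + M - M * ρ ^ 2)) (hξ : ξ = (4 + M) / (4 + M - M * ρ ^ 2))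
    (uin uout u : V2 → V2)
    (huin : uin = fun x => ζ • x)
    (huout : uout = fun x => (ξ + (1 - ξ) / (en x) ^ 2) • x)
    (hu : u = fun x => if en x ≤ ρ then uin x else uout x) :
    ContinuousOn u {x | en x ≤ 1} ∧
    (∀ x, en x = 1 → u x = x) ∧
    (∀ x, en x < ρ → lap2 u x = 0) ∧
    (∀ x, ρ < en x → en x < 1 → lap2 u x = 0) ∧
    (∀ x : V2, en x = ρ →
      (2 : ℝ) • fderiv ℝ uin x (ρ⁻¹ • x)
        + (2 : ℝ) • fderiv ℝ uout x (-(ρ⁻¹ • x))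
        - M • Jmat.mulVec (fderiv ℝ uin x (Jmat.mulVec (ρ⁻¹ • x))) = 0) := by
  have hρ2 : (0:ℝ) < ρ ^ 2 := by positivity
  have huout' : uout = fun y => (ξ + (1 - ξ) * (qf y)⁻¹) • y := by
    rw [huout]; funext y; rw [en_sq, div_eq_mul_inv]
  have hζeq : ζ = ξ + (1 - ξ) / ρ ^ 2 := by
    rw [hζ, hξ]; field_simp; ring
  have hqpos : ∀ y : V2, ρ ≤ en y → ρ ^ 2 ≤ qf y := by
    intro y hy
    rw [← en_sq]
    have h0 : (0:ℝ) ≤ en y := Real.sqrt_nonneg _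
    nlinarith
  refine ⟨?_, ?_, ?_, ?_, ?_⟩
  · -- continuity
    rw [hu]
    apply ContinuousOn.if
    · rintro a ⟨-, hfr⟩
      have ha : en a = ρ := frontier_le_subset_eq continuous_en continuous_const hfr
      rw [huin, huout]
      simp only
      rw [ha, ← hζeq]
    · rw [huin]; exact (continuous_const_smul ζ).continuousOn
    · have hsub : closure {a : V2 | ¬ en a ≤ ρ} ⊆ {a | ρ ≤ en a} := by
        have hset : {a : V2 | ¬ en a ≤ ρ} = {a | ρ < en a} := by ext a; simp [not_le]
        rw [hset]
        exact closure_lt_subset_le continuous_const continuous_en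
      refine ContinuousOn.mono ?_ ((Set.inter_subset_right).trans hsub)
      rw [huout']
      refine ContinuousOn.fun_smul ?_ (continuousOn_id (α := V2))
      refine continuousOn_const.add (continuousOn_const.mul
        (ContinuousOn.inv₀ continuous_qf.continuousOn ?_))
      intro y hy
      exact (hρ2.trans_le (hqpos y hy)).ne'
  · -- boundary values
    intro x hx
    rw [hu]
    simp only
    rw [if_neg (by rw [hx]; exact not_le.2 hρ1), huout]
    simp only [hx]
    norm_num
  · -- harmonicity inside
    intro x hx
    have hU : IsOpen {y : V2 | en y < ρ} := isOpen_lt continuous_en continuous_const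
    have key : ∀ j : Fin 2, fderiv ℝ (fun y => fderiv ℝ u y (Pi.single j 1)) x (Pi.single j 1) = 0 := by
      intro j
      have hev : (fun y => fderiv ℝ u y (Pi.single j 1)) =ᶠ[nhds x]
          (fun _ => ζ • (Pi.single j 1 : V2)) := by
        refine Filter.eventually_of_mem (hU.mem_nhds hx) (fun y hy => ?_)
        show fderiv ℝ u y (Pi.single j 1) = (ζ • (Pi.single j 1 : V2) : V2)
        have huev : u =ᶠ[nhds y] (fun z => ζ • z) := by
          refine Filter.eventually_of_mem (hU.mem_nhds hy) (fun z hz => ?_)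
          rw [hu]; simp only; rw [if_pos (le_of_lt hz), huin]
        have hD : HasFDerivAt (fun z : V2 => ζ • z) (ζ • ContinuousLinearMap.id ℝ V2) y :=
          (hasFDerivAt_id y).const_smul ζ
        rw [huev.fderiv_eq, hD.fderiv]
        simp
      rw [hev.fderiv_eq]
      simp
    unfold lap2
    rw [Fin.sum_univ_two, key 0, key 1]
    simp
  · -- harmonicity in the annulus
    intro x hx hx1
    have hU : IsOpen {y : V2 | ρ < en y} := isOpen_lt continuous_const continuous_en
    have hqne : ∀ y : V2, ρ < en y → qf y ≠ 0 := by
      intro y hy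
      exact (hρ2.trans_le (hqpos y hy.le)).ne'
    have hev : ∀ j : Fin 2, (fun y => fderiv ℝ u y (Pi.single j 1)) =ᶠ[nhds x]
        (fun y : V2 => (ξ + (1-ξ) * (qf y)⁻¹) • (Pi.single j 1 : V2) +
          (-(2*(1-ξ)) * (y j * (qf y * qf y)⁻¹)) • y) := by
      intro j
      refine Filter.eventually_of_mem (hU.mem_nhds hx) (fun y hy => ?_)
      show fderiv ℝ u y (Pi.single j 1) = _
      have huev : u =ᶠ[nhds y] uout := by
        refine Filter.eventually_of_mem (hU.mem_nhds hy) (fun z hz => ?_)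
        rw [hu]; simp only; rw [if_neg (not_le.2 hz)]
      rw [huev.fderiv_eq, huout', (hasFDerivAt_uoutq ξ (1-ξ) y (hqne y hy)).fderiv]
      exact Dout_single ξ y j
    have key : ∀ j : Fin 2, fderiv ℝ (fun y => fderiv ℝ u y (Pi.single j 1)) x (Pi.single j 1)
        = DF ξ (1-ξ) j x (Pi.single j 1) := by
      intro j
      rw [(hev j).fderiv_eq, (hasFDerivAt_Fj ξ (1-ξ) j x (hqne x hx)).fderiv]
    unfold lap2
    rw [Fin.sum_univ_two, key 0, key 1]
    exact lap_annulus ξ (1-ξ) x (hqne x hx)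
  · -- jump condition
    intro x hx
    have hqx : qf x = ρ ^ 2 := by rw [← en_sq, hx]
    have hqne : qf x ≠ 0 := by rw [hqx]; positivity
    have hin : fderiv ℝ uin x = ζ • ContinuousLinearMap.id ℝ V2 := by
      rw [huin]
      have hD : HasFDerivAt (fun z : V2 => ζ • z) (ζ • ContinuousLinearMap.id ℝ V2) x :=
        (hasFDerivAt_id x).const_smul ζ
      exact hD.fderiv
    have hout : fderiv ℝ uout x = Dout ξ (1-ξ) x := by
      rw [huout']; exact (hasFDerivAt_uoutq ξ (1-ξ) x hqne).fderiv
    rw [hin, hout]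
    have h1 : ζ * ρ ^ 2 = ξ * ρ ^ 2 + (1 - ξ) := by
      rw [hζ, hξ]; field_simp; ring
    have h2 : 4 * (1 - ξ) + M * (ζ * ρ ^ 2) = 0 := by
      rw [hζ, hξ]; field_simp; ring
    exact jump_eval ρ M ζ ξ hρ0 h1 h2 x hqx
end

section
/- Let u^s(R,θ) = (1, R² sin 2θ) and u^p(R,θ) = (1 + (M/2)R² cos 2θ, R² sin 2θ) in plane polar coordinates. Then both u^s and u^p are harmonic (as functions of (x₁,x₂) = (R cos θ, R sin θ)), they agree on the rays θ = ±π/4, and along those rays the jump condition 2∂_θ u^s − 2∂_θ u^p = M R Jᵀ ∂_R u^s holds (with the sign of J adjusted on θ = −π/4: 2∂_θ u^s − 2∂_θ u^p = −M R J ∂_R u^s there). -/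
open MeasureTheory

noncomputable def pr (j : Fin 2) : V2 →L[ℝ] ℝ := ContinuousLinearMap.proj j

noncomputable def pairCLM (f' g' : V2 →L[ℝ] ℝ) : V2 →L[ℝ] V2 :=
  ContinuousLinearMap.pi ![f', g']

lemma pairCLM_apply (f' g' : V2 →L[ℝ] ℝ) (v : V2) (i : Fin 2) :
    pairCLM f' g' v i = ![f' v, g' v] i := by
  fin_cases i <;> rfl

lemma hasFDerivAt_pair {f g : V2 → ℝ} {f' g' : V2 →L[ℝ] ℝ} {x : V2}
    (hf : HasFDerivAt f f' x) (hg : HasFDerivAt g g' x) :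
    HasFDerivAt (fun x => ![f x, g x]) (pairCLM f' g') x := by
  rw [hasFDerivAt_pi']
  intro i
  fin_cases i
  · exact hf
  · exact hg

lemma hg_deriv (y : V2) :
    HasFDerivAt (fun x : V2 => 2 * x 0 * x 1)
      ((2 * y 1) • pr 0 + (2 * y 0) • pr 1) y := by
  have h := (((pr 0).hasFDerivAt (x := y)).const_mul 2).mul ((pr 1).hasFDerivAt (x := y))
  refine h.congr_fderiv ?_
  ext v
  simp [pr]
  ring

lemma hf_deriv (M : ℝ) (y : V2) :
    HasFDerivAt (fun x : V2 => 1 + (M / 2) * (x 0 ^ 2 - x 1 ^ 2))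
      ((M * y 0) • pr 0 - (M * y 1) • pr 1) y := by
  have hfun : (fun x : V2 => 1 + (M / 2) * (x 0 ^ 2 - x 1 ^ 2))
      = fun x : V2 => 1 + (M / 2) * (x 0 * x 0 - x 1 * x 1) := by
    funext x; ring
  rw [hfun]
  have h := (((((pr 0).hasFDerivAt (x := y)).mul ((pr 0).hasFDerivAt (x := y))).sub
      (((pr 1).hasFDerivAt (x := y)).mul ((pr 1).hasFDerivAt (x := y)))).const_mul
      (M / 2)).const_add 1
  refine h.congr_fderiv ?_
  ext v
  simp [pr]
  ring

/-- The disk-sector maps `u^s(R,θ) = (1, R² sin 2θ)` and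
`u^p(R,θ) = (1 + (M/2)R² cos 2θ, R² sin 2θ)` are harmonic in Cartesian coordinates,
agree on the rays `θ = ±π/4`, and satisfy the jump conditions
`2∂_θ u^s − 2∂_θ u^p = M R Jᵀ ∂_R u^s` on `θ = π/4` and
`2∂_θ u^s − 2∂_θ u^p = −M R J ∂_R u^s` on `θ = −π/4`. -/
theorem disk_sector_solution (M : ℝ)
    (Usc Upc : V2 → V2)
    (hUs : Usc = fun x => ![1, 2 * x 0 * x 1])
    (hUp : Upc = fun x => ![1 + (M / 2) * (x 0 ^ 2 - x 1 ^ 2), 2 * x 0 * x 1])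
    (us up : ℝ → ℝ → V2)
    (hus : us = fun R θ => ![1, R ^ 2 * Real.sin (2 * θ)])
    (hup : up = fun R θ => ![1 + (M / 2) * R ^ 2 * Real.cos (2 * θ),
                             R ^ 2 * Real.sin (2 * θ)]) :
    (∀ x, lap2 Usc x = 0) ∧
    (∀ x, lap2 Upc x = 0) ∧
    (∀ x : V2, x 0 = x 1 ∨ x 0 = -(x 1) → Usc x = Upc x) ∧
    (∀ R : ℝ,
      (fun i => 2 * deriv (fun t => us R t i) (Real.pi / 4)
              - 2 * deriv (fun t => up R t i) (Real.pi / 4))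
        = (M * R) • Jmat.transpose.mulVec
            (fun j => deriv (fun r => us r (Real.pi / 4) j) R)) ∧
    (∀ R : ℝ,
      (fun i => 2 * deriv (fun t => us R t i) (-(Real.pi / 4))
              - 2 * deriv (fun t => up R t i) (-(Real.pi / 4)))
        = (-(M * R)) • Jmat.mulVec
            (fun j => deriv (fun r => us r (-(Real.pi / 4)) j) R)) := by
  -- first derivatives of Usc, Upc
  have hUsD : ∀ y : V2, HasFDerivAt Usc
      (pairCLM 0 ((2 * y 1) • pr 0 + (2 * y 0) • pr 1)) y := by
    intro y
    rw [hUs]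
    exact hasFDerivAt_pair (hasFDerivAt_const _ _) (hg_deriv y)
  have hUpD : ∀ y : V2, HasFDerivAt Upc
      (pairCLM ((M * y 0) • pr 0 - (M * y 1) • pr 1)
               ((2 * y 1) • pr 0 + (2 * y 0) • pr 1)) y := by
    intro y
    rw [hUp]
    exact hasFDerivAt_pair (hf_deriv M y) (hg_deriv y)
  -- the inner functions y ↦ fderiv u y (e j) explicitly
  have hin_s0 : (fun y => fderiv ℝ Usc y (Pi.single (0 : Fin 2) 1))
      = fun y : V2 => ![0, 2 * y 1] := by
    funext y
    rw [(hUsD y).fderiv]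
    funext i
    rw [pairCLM_apply]
    fin_cases i <;> simp [pr]
  have hin_s1 : (fun y => fderiv ℝ Usc y (Pi.single (1 : Fin 2) 1))
      = fun y : V2 => ![0, 2 * y 0] := by
    funext y
    rw [(hUsD y).fderiv]
    funext i
    rw [pairCLM_apply]
    fin_cases i <;> simp [pr]
  have hin_p0 : (fun y => fderiv ℝ Upc y (Pi.single (0 : Fin 2) 1))
      = fun y : V2 => ![M * y 0, 2 * y 1] := by
    funext y
    rw [(hUpD y).fderiv]
    funext i
    rw [pairCLM_apply]
    fin_cases i <;> simp [pr]
  have hin_p1 : (fun y => fderiv ℝ Upc y (Pi.single (1 : Fin 2) 1))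
      = fun y : V2 => ![-(M * y 1), 2 * y 0] := by
    funext y
    rw [(hUpD y).fderiv]
    funext i
    rw [pairCLM_apply]
    fin_cases i <;> simp [pr]
  -- second derivatives
  have hd_s0 : ∀ y : V2, HasFDerivAt (fun y : V2 => ![0, 2 * y 1])
      (pairCLM 0 ((2:ℝ) • pr 1)) y := fun y =>
    hasFDerivAt_pair (hasFDerivAt_const _ _) (((pr 1).hasFDerivAt).const_mul 2)
  have hd_s1 : ∀ y : V2, HasFDerivAt (fun y : V2 => ![0, 2 * y 0])
      (pairCLM 0 ((2:ℝ) • pr 0)) y := fun y =>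
    hasFDerivAt_pair (hasFDerivAt_const _ _) (((pr 0).hasFDerivAt).const_mul 2)
  have hd_p0 : ∀ y : V2, HasFDerivAt (fun y : V2 => ![M * y 0, 2 * y 1])
      (pairCLM (M • pr 0) ((2:ℝ) • pr 1)) y := fun y =>
    hasFDerivAt_pair (((pr 0).hasFDerivAt).const_mul M) (((pr 1).hasFDerivAt).const_mul 2)
  have hd_p1 : ∀ y : V2, HasFDerivAt (fun y : V2 => ![-(M * y 1), 2 * y 0])
      (pairCLM (-(M • pr 1)) ((2:ℝ) • pr 0)) y := by
    intro y
    have h1 : HasFDerivAt (fun y : V2 => -(M * y 1)) (-(M • pr 1)) y :=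
      (((pr 1).hasFDerivAt (x := y)).const_mul M).neg
    exact hasFDerivAt_pair h1 (((pr 0).hasFDerivAt).const_mul 2)
  have h2 : ∀ θ : ℝ, HasDerivAt (fun t : ℝ => 2 * t) 2 θ := by
    intro θ; simpa using (hasDerivAt_id θ).const_mul 2
  have dusT0 : ∀ R θ : ℝ, deriv (fun t => us R t 0) θ = 0 := by
    intro R θ; simp [hus]
  have dusT1 : ∀ R θ : ℝ, deriv (fun t => us R t 1) θ
      = R ^ 2 * (Real.cos (2 * θ) * 2) := by
    intro R θ
    have h : HasDerivAt (fun t => R ^ 2 * Real.sin (2 * t))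
        (R ^ 2 * (Real.cos (2 * θ) * 2)) θ := ((h2 θ).sin).const_mul (R ^ 2)
    simp only [hus, Matrix.cons_val_one, Matrix.head_cons]
    exact h.deriv
  have dupT0 : ∀ R θ : ℝ, deriv (fun t => up R t 0) θ
      = M / 2 * R ^ 2 * (-Real.sin (2 * θ) * 2) := by
    intro R θ
    have h : HasDerivAt (fun t => 1 + M / 2 * R ^ 2 * Real.cos (2 * t))
        (M / 2 * R ^ 2 * (-Real.sin (2 * θ) * 2)) θ :=
      (((h2 θ).cos).const_mul (M / 2 * R ^ 2)).const_add 1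
    simp only [hup, Matrix.cons_val_zero]
    exact h.deriv
  have dupT1 : ∀ R θ : ℝ, deriv (fun t => up R t 1) θ
      = R ^ 2 * (Real.cos (2 * θ) * 2) := by
    intro R θ
    have h : HasDerivAt (fun t => R ^ 2 * Real.sin (2 * t))
        (R ^ 2 * (Real.cos (2 * θ) * 2)) θ := ((h2 θ).sin).const_mul (R ^ 2)
    simp only [hup, Matrix.cons_val_one, Matrix.head_cons]
    exact h.deriv
  have dusR0 : ∀ R θ : ℝ, deriv (fun r => us r θ 0) R = 0 := by
    intro R θ; simp [hus]
  have dusR1 : ∀ R θ : ℝ, deriv (fun r => us r θ 1) R = 2 * R * Real.sin (2 * θ) := by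
    intro R θ
    have h : HasDerivAt (fun r : ℝ => r ^ 2 * Real.sin (2 * θ))
        (2 * R * Real.sin (2 * θ)) R := by
      have := (hasDerivAt_pow 2 R).mul_const (Real.sin (2 * θ))
      refine this.congr_deriv ?_
      push_cast; ring
    simp only [hus, Matrix.cons_val_one, Matrix.head_cons]
    exact h.deriv
  have hJt : Jmat.transpose = !![0, 1; -1, 0] := by
    ext i j; fin_cases i <;> fin_cases j <;> simp [Jmat]
  have e1 : 2 * (Real.pi / 4) = Real.pi / 2 := by ring
  have e2 : 2 * (-(Real.pi / 4)) = -(Real.pi / 2) := by ring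
  refine ⟨?_, ?_, ?_, ?_, ?_⟩
  · intro x
    simp only [lap2, Fin.sum_univ_two, hin_s0, hin_s1, (hd_s0 x).fderiv, (hd_s1 x).fderiv]
    funext i
    rw [Pi.add_apply, pairCLM_apply, pairCLM_apply]
    fin_cases i <;> simp [pr]
  · intro x
    simp only [lap2, Fin.sum_univ_two, hin_p0, hin_p1, (hd_p0 x).fderiv, (hd_p1 x).fderiv]
    funext i
    rw [Pi.add_apply, pairCLM_apply, pairCLM_apply]
    fin_cases i <;> simp [pr]
  · intro x hx
    have hx2 : x 0 ^ 2 - x 1 ^ 2 = 0 := by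
      rcases hx with h | h <;> rw [h] <;> ring
    funext i
    fin_cases i <;> simp [hUs, hUp, hx2]
  · intro R
    have hv : (fun j => deriv (fun r => us r (Real.pi / 4) j) R) = ![0, 2 * R] := by
      funext j
      fin_cases j
      · exact dusR0 R _
      · show deriv (fun r => us r (Real.pi / 4) 1) R = 2 * R
        rw [dusR1, e1, Real.sin_pi_div_two]; ring
    rw [hv]
    funext i
    fin_cases i <;>
      simp [dusT0, dusT1, dupT0, dupT1, hJt, e1, Real.sin_pi_div_two,
        Real.cos_pi_div_two, Matrix.mulVec, Fin.sum_univ_two] <;> ring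
  · intro R
    have hv : (fun j => deriv (fun r => us r (-(Real.pi / 4)) j) R) = ![0, -(2 * R)] := by
      funext j
      fin_cases j
      · exact dusR0 R _
      · show deriv (fun r => us r (-(Real.pi / 4)) 1) R = -(2 * R)
        rw [dusR1, e2, Real.sin_neg, Real.sin_pi_div_two]; ring
    rw [hv]
    funext i
    fin_cases i <;>
      simp [dusT0, dusT1, dupT0, dupT1, Jmat, e2, Real.sin_pi_div_two,
        Real.cos_pi_div_two, Real.sin_neg, Real.cos_neg, Matrix.mulVec,
        Fin.sum_univ_two] <;> ring
end
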